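/- arXiv:2412.19339 — 3 statements merged into one kernel-verified Lean document; each statement's English description precedes it below -/
import Mathlib

section
/- Let n ≥ 1, let a₁, a₂, a₃ ∈ ℂ with a₁ ≠ 0, let c ∈ ℂⁿ, let 1 ≤ μ ≤ n, and let g : ℂⁿ → ℂ be a holomorphic function satisfying 2a₂·∂g/∂z_μ(z) + a₃·(∂g/∂z_μ(z))² + 2a₃·∂²g/∂z_μ²(z) = 0 for all z ∈ ℂⁿ. Define f(z) = ε·(1/a₁)·e^{g(z−c)/2} where ε ∈ {1, −1}. Then f satisfies a₁²·f(z+c)² + (a₂·∂f/∂z_μ(z) + a₃·∂²f/∂z_μ²(z))² = e^{g(z)} for all z ∈ ℂⁿ. -/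
open Complex

/-- Complex partial derivative in the `μ`-th coordinate of a function on `ℂⁿ`. -/
noncomputable def pd {n : ℕ} (μ : Fin n) (f : (Fin n → ℂ) → ℂ) : (Fin n → ℂ) → ℂ :=
  fun z => deriv (fun w => f (Function.update z μ w)) (z μ)

lemma updDiff {n : ℕ} (G : (Fin n → ℂ) → ℂ) (hG : Differentiable ℂ G)
    (y : Fin n → ℂ) (μ : Fin n) :
    Differentiable ℂ (fun w => G (Function.update y μ w)) := by
  apply hG.comp
  apply differentiable_pi.mpr
  intro ν
  have : (fun w : ℂ => Function.update y μ w ν) = fun w => if ν = μ then w else y ν := by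
    funext w; simp [Function.update_apply]
  rw [this]
  by_cases h : ν = μ <;> simp [h] <;> fun_prop

lemma updHasDeriv {n : ℕ} (G : (Fin n → ℂ) → ℂ) (hG : Differentiable ℂ G)
    (y : Fin n → ℂ) (μ : Fin n) :
    HasDerivAt (fun w => G (Function.update y μ w)) (pd μ G y) (y μ) :=
  (updDiff G hG y μ (y μ)).hasDerivAt

/-- The sliced second derivative. -/
lemma pd_pd_slice {n : ℕ} (G : (Fin n → ℂ) → ℂ) (hG : Differentiable ℂ G)
    (y : Fin n → ℂ) (μ : Fin n) :
    (fun w => pd μ G (Function.update y μ w)) = deriv (fun u => G (Function.update y μ u)) := by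
  funext w
  simp only [pd, Function.update_idem, Function.update_self]

lemma slice_pd_diff {n : ℕ} (G : (Fin n → ℂ) → ℂ) (hG : Differentiable ℂ G)
    (y : Fin n → ℂ) (μ : Fin n) :
    Differentiable ℂ (fun w => pd μ G (Function.update y μ w)) := by
  rw [pd_pd_slice G hG y μ]
  have hφ : Differentiable ℂ (fun u => G (Function.update y μ u)) := updDiff G hG y μ
  have : deriv (fun u => G (Function.update y μ u))
      = fun x => fderiv ℂ (fun u => G (Function.update y μ u)) x 1 := by
    funext x; rfl
  rw [this]
  intro x
  exact ((ContinuousLinearMap.apply ℂ ℂ (1 : ℂ)).differentiable.differentiableAt).comp x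
    ((hφ.analyticAt x).fderiv.differentiableAt)

lemma updHasDeriv₂ {n : ℕ} (G : (Fin n → ℂ) → ℂ) (hG : Differentiable ℂ G)
    (y : Fin n → ℂ) (μ : Fin n) :
    HasDerivAt (fun w => pd μ G (Function.update y μ w)) (pd μ (pd μ G) y) (y μ) :=
  (slice_pd_diff G hG y μ (y μ)).hasDerivAt

lemma upd_sub {n : ℕ} (z c : Fin n → ℂ) (μ : Fin n) (w : ℂ) :
    Function.update z μ w - c = Function.update (z - c) μ (w - c μ) := by
  funext ν
  by_cases h : ν = μ
  · subst h; simp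
  · simp [Function.update_apply, h]

theorem stmt13 {n : ℕ} (hn : 1 ≤ n) (a₁ a₂ a₃ : ℂ) (ha₁ : a₁ ≠ 0)
    (c : Fin n → ℂ) (μ : Fin n) (g : (Fin n → ℂ) → ℂ) (hg : Differentiable ℂ g)
    (hpde : ∀ z, 2 * a₂ * pd μ g z + a₃ * (pd μ g z) ^ 2 + 2 * a₃ * pd μ (pd μ g) z = 0)
    (ε : ℂ) (hε : ε = 1 ∨ ε = -1)
    (f : (Fin n → ℂ) → ℂ)
    (hf : ∀ z, f z = ε * (1 / a₁) * Complex.exp (g (z - c) / 2)) :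
    ∀ z, a₁ ^ 2 * (f (z + c)) ^ 2 + (a₂ * pd μ f z + a₃ * pd μ (pd μ f) z) ^ 2
      = Complex.exp (g z) := by
  set k : ℂ := ε * (1 / a₁) with hk
  -- first derivative of f
  have hpdf : ∀ z, pd μ f z = k * Complex.exp (g (z - c) / 2) * (pd μ g (z - c) / 2) := by
    intro z
    have hmem : (z - c) μ = z μ - c μ := rfl
    have h1 : HasDerivAt (fun w => g (Function.update (z - c) μ (w - c μ)))
        (pd μ g (z - c)) (z μ) := by
      have := (updHasDeriv g hg (z - c) μ).comp (z μ)
        ((hasDerivAt_id (z μ)).sub_const (c μ))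
      simpa [hmem, Function.comp_def] using this
    have h2 := ((h1.div_const 2).cexp).const_mul k
    have heq : (fun w => f (Function.update z μ w))
        = fun w => k * Complex.exp (g (Function.update (z - c) μ (w - c μ)) / 2) := by
      funext w
      rw [hf, upd_sub]
    have : pd μ f z = k * (Complex.exp (g (Function.update (z - c) μ ((z μ) - c μ)) / 2)
        * (pd μ g (z - c) / 2)) := by
      rw [pd, heq]
      exact h2.deriv
    rw [this]
    have : Function.update (z - c) μ (z μ - c μ) = z - c := by
      rw [← hmem]; exact Function.update_eq_self μ (z - c)
    rw [this]; ring
  -- second derivative of f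
  have hpdf2 : ∀ z, pd μ (pd μ f) z = k * Complex.exp (g (z - c) / 2) *
      ((pd μ g (z - c)) ^ 2 / 4 + pd μ (pd μ g) (z - c) / 2) := by
    intro z
    have hmem : (z - c) μ = z μ - c μ := rfl
    have h1 : HasDerivAt (fun w => g (Function.update (z - c) μ (w - c μ)))
        (pd μ g (z - c)) (z μ) := by
      have := (updHasDeriv g hg (z - c) μ).comp (z μ)
        ((hasDerivAt_id (z μ)).sub_const (c μ))
      simpa [hmem, Function.comp_def] using this
    have h1' : HasDerivAt (fun w => pd μ g (Function.update (z - c) μ (w - c μ)))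
        (pd μ (pd μ g) (z - c)) (z μ) := by
      have := (updHasDeriv₂ g hg (z - c) μ).comp (z μ)
        ((hasDerivAt_id (z μ)).sub_const (c μ))
      simpa [hmem, Function.comp_def] using this
    have hA := (h1.div_const 2).cexp
    have hB := h1'.div_const 2
    have hprod := ((hA.mul hB).const_mul k)
    have heq : (fun w => pd μ f (Function.update z μ w))
        = fun w => k * (Complex.exp (g (Function.update (z - c) μ (w - c μ)) / 2)
            * (pd μ g (Function.update (z - c) μ (w - c μ)) / 2)) := by
      funext w
      rw [hpdf, upd_sub]; ring
    have hself : Function.update (z - c) μ (z μ - c μ) = z - c := by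
      rw [← hmem]; exact Function.update_eq_self μ (z - c)
    have : pd μ (pd μ f) z = k * (Complex.exp (g (z - c) / 2) * (pd μ g (z - c) / 2)
        * (pd μ g (z - c) / 2) + Complex.exp (g (z - c) / 2) * (pd μ (pd μ g) (z - c) / 2)) := by
      rw [pd, heq]
      have := hprod.deriv
      simp only [Pi.mul_apply] at this
      rw [this, hself]
    rw [this]; ring
  -- conclude
  intro z
  have hzero : a₂ * pd μ f z + a₃ * pd μ (pd μ f) z = 0 := by
    rw [hpdf, hpdf2]
    have h := hpde (z - c)
    have : a₂ * (pd μ g (z - c) / 2) + a₃ * ((pd μ g (z - c)) ^ 2 / 4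
        + pd μ (pd μ g) (z - c) / 2)
        = (2 * a₂ * pd μ g (z - c) + a₃ * (pd μ g (z - c)) ^ 2
          + 2 * a₃ * pd μ (pd μ g) (z - c)) / 4 := by ring
    calc a₂ * (k * Complex.exp (g (z - c) / 2) * (pd μ g (z - c) / 2))
        + a₃ * (k * Complex.exp (g (z - c) / 2) * ((pd μ g (z - c)) ^ 2 / 4
          + pd μ (pd μ g) (z - c) / 2))
        = k * Complex.exp (g (z - c) / 2) * ((2 * a₂ * pd μ g (z - c)
          + a₃ * (pd μ g (z - c)) ^ 2 + 2 * a₃ * pd μ (pd μ g) (z - c)) / 4) := by ring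
      _ = 0 := by rw [h]; ring
  rw [hzero, hf]
  have hzc : z + c - c = z := by funext ν; simp
  rw [hzc]
  have hε2 : ε ^ 2 = 1 := by rcases hε with h | h <;> rw [h] <;> ring
  have hexp : Complex.exp (g z / 2) ^ 2 = Complex.exp (g z) := by
    rw [← Complex.exp_nat_mul]
    congr 1
    push_cast
    ring
  have hk2 : a₁ ^ 2 * k ^ 2 = 1 := by
    have h : a₁ ^ 2 * k ^ 2 = ε ^ 2 := by rw [hk]; field_simp
    rw [h, hε2]
  calc a₁ ^ 2 * (k * Complex.exp (g z / 2)) ^ 2 + 0 ^ 2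
      = a₁ ^ 2 * k ^ 2 * Complex.exp (g z / 2) ^ 2 := by ring
    _ = Complex.exp (g z) := by rw [hk2, hexp]; ring
end

section
/- Let n ≥ 2, let a₁, a₂, a₃ ∈ ℂ with a₁ ≠ 0, let c ∈ ℂⁿ, let 1 ≤ μ < ν ≤ n, and let g : ℂⁿ → ℂ be a holomorphic function satisfying 2a₂·∂g/∂z_μ(z) + a₃·∂g/∂z_μ(z)·∂g/∂z_ν(z) + 2a₃·∂²g/∂z_μ∂z_ν(z) = 0 for all z ∈ ℂⁿ. Define f(z) = ε·(1/a₁)·e^{g(z−c)/2} with ε ∈ {1, −1}. Then f satisfies a₁²·f(z+c)² + (a₂·∂f/∂z_μ(z) + a₃·∂²f/∂z_μ∂z_ν(z))² = e^{g(z)} for all z ∈ ℂⁿ. -/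
open Complex

section aux

open Metric Set Filter Topology

/-- Cauchy estimate for the derivative of an entire function. -/
lemma deriv_norm_le {f : ℂ → ℂ} (hf : Differentiable ℂ f) {M : ℝ} {u : ℂ}
    (hb : ∀ v ∈ sphere u 1, ‖f v‖ ≤ M) : ‖deriv f u‖ ≤ M := by
  rw [← Complex.cderiv_eq_deriv isOpen_univ hf.differentiableOn one_pos (subset_univ _)]
  simpa using Complex.norm_cderiv_le one_pos hb

/-- Second-order estimate for difference quotients of an entire function. -/
lemma diffquot_est {f : ℂ → ℂ} (hf : Differentiable ℂ f) {M : ℝ} {u₀ : ℂ}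
    (hb : ∀ v ∈ closedBall u₀ 3, ‖f v‖ ≤ M) {h : ℂ} (h0 : h ≠ 0) (h1 : ‖h‖ ≤ 1) :
    ‖(f (u₀ + h) - f u₀) / h - deriv f u₀‖ ≤ M * ‖h‖ := by
  have hM : 0 ≤ M := (norm_nonneg _).trans (hb u₀ (by simp))
  have hfd : Differentiable ℂ (deriv f) := by
    have := ((analyticOnNhd_univ_iff_differentiable).mpr hf).deriv
    exact (analyticOnNhd_univ_iff_differentiable).mp this
  -- first derivative bound on closedBall u₀ 2
  have hd1 : ∀ v ∈ closedBall u₀ 2, ‖deriv f v‖ ≤ M := by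
    intro v hv
    refine deriv_norm_le hf fun w hw => hb w ?_
    simp only [mem_closedBall, mem_sphere] at *
    calc dist w u₀ ≤ dist w v + dist v u₀ := dist_triangle _ _ _
      _ ≤ 1 + 2 := add_le_add (le_of_eq hw) hv
      _ ≤ 3 := by norm_num
  -- second derivative bound on closedBall u₀ 1
  have hd2 : ∀ v ∈ closedBall u₀ 1, ‖deriv (deriv f) v‖ ≤ M := by
    intro v hv
    refine deriv_norm_le hfd fun w hw => hd1 w ?_
    simp only [mem_closedBall, mem_sphere] at *
    calc dist w u₀ ≤ dist w v + dist v u₀ := dist_triangle _ _ _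
      _ ≤ 1 + 1 := add_le_add (le_of_eq hw) hv
      _ ≤ 2 := by norm_num
  -- Lipschitz bound for deriv f near u₀
  have hlip : ∀ v ∈ closedBall u₀ 1, ‖deriv f v - deriv f u₀‖ ≤ M * ‖v - u₀‖ := by
    intro v hv
    exact (convex_closedBall u₀ 1).norm_image_sub_le_of_norm_deriv_le
      (fun x _ => hfd.differentiableAt) hd2 (mem_closedBall_self (by norm_num)) hv
  -- the auxiliary function
  set φ : ℂ → ℂ := fun u => f u - u * deriv f u₀ with hφ
  have hφd : ∀ u, HasDerivAt φ (deriv f u - deriv f u₀) u := fun u =>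
    (hf.differentiableAt.hasDerivAt).sub (hasDerivAt_mul_const (deriv f u₀))
  have hφb : ∀ v ∈ closedBall u₀ ‖h‖, ‖deriv φ v‖ ≤ M * ‖h‖ := by
    intro v hv
    rw [(hφd v).deriv]
    calc ‖deriv f v - deriv f u₀‖ ≤ M * ‖v - u₀‖ := by
          refine hlip v (mem_closedBall.mpr ((mem_closedBall.mp hv).trans h1))
      _ ≤ M * ‖h‖ := by
          have : ‖v - u₀‖ ≤ ‖h‖ := by
            rw [← dist_eq_norm]; exact mem_closedBall.mp hv
          exact mul_le_mul_of_nonneg_left this hM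
  have key : ‖φ (u₀ + h) - φ u₀‖ ≤ M * ‖h‖ * ‖h‖ := by
    have := (convex_closedBall u₀ ‖h‖).norm_image_sub_le_of_norm_deriv_le
      (fun x _ => (hφd x).differentiableAt) hφb
      (mem_closedBall_self (norm_nonneg _))
      (show u₀ + h ∈ closedBall u₀ ‖h‖ by
        simp [mem_closedBall, dist_eq_norm])
    simpa using this
  have hrw : (f (u₀ + h) - f u₀) / h - deriv f u₀ = (φ (u₀ + h) - φ u₀) / h := by
    field_simp [hφ]
    ring
  rw [hrw, norm_div]
  rw [div_le_iff₀ (norm_pos_iff.mpr h0)]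
  exact key

/-- The mixed partial of an entire function in several variables exists:
`pd μ g` is differentiable along the `ν`-line. -/
lemma pd_update_differentiable {n : ℕ} {g : (Fin n → ℂ) → ℂ} (hg : Differentiable ℂ g)
    {μ ν : Fin n} (hμν : μ ≠ ν) (z : Fin n → ℂ) :
    Differentiable ℂ (fun w : ℂ => pd μ g (Function.update z ν w)) := by
  classical
  set L : ℂ → ℂ → (Fin n → ℂ) := fun u w => Function.update (Function.update z ν w) μ u with hL
  have hLcomm : ∀ u w, L u w = Function.update (Function.update z μ u) ν w := by
    intro u w
    exact Function.update_comm (Ne.symm hμν) w u z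
  have hLcont : Continuous fun p : ℂ × ℂ => L p.1 p.2 := by
    refine continuous_pi fun i => ?_
    have hco : ∀ p : ℂ × ℂ, L p.1 p.2 i = if i = μ then p.1 else if i = ν then p.2 else z i := by
      intro p
      simp [hL, Function.update_apply]
    simp only [hco]
    by_cases h1 : i = μ
    · simpa [h1] using (continuous_fst : Continuous fun p : ℂ × ℂ => p.1)
    · by_cases h2 : i = ν
      · simpa [h1, h2, Ne.symm hμν] using (continuous_snd : Continuous fun p : ℂ × ℂ => p.2)
      · simpa [h1, h2] using (continuous_const : Continuous fun _ : ℂ × ℂ => z i)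
  -- holomorphy in u for fixed w, and in w for fixed u
  have hGu : ∀ w, Differentiable ℂ fun u => g (L u w) := by
    intro w u
    exact hg.differentiableAt.comp u (hasDerivAt_update _ μ u).differentiableAt
  have hGw : ∀ u, Differentiable ℂ fun w => g (L u w) := by
    intro u
    have heq : (fun w => g (L u w)) = fun w => g (Function.update (Function.update z μ u) ν w) := by
      funext w; rw [hLcomm]
    rw [heq]
    intro w
    exact hg.differentiableAt.comp w (hasDerivAt_update _ ν w).differentiableAt
  set P : ℂ → ℂ := fun w => deriv (fun u => g (L u w)) (z μ) with hP
  set q : ℂ → ℂ → ℂ := fun h w => (g (L (z μ + h) w) - g (L (z μ) w)) / h with hq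
  have htul : TendstoLocallyUniformlyOn q P (𝓝[≠] (0:ℂ)) Set.univ := by
    rw [tendstoLocallyUniformlyOn_iff_forall_isCompact isOpen_univ]
    intro K _ hK
    obtain ⟨M₀, hM₀⟩ : ∃ M₀, ∀ p ∈ (closedBall (z μ) 3) ×ˢ K, ‖g (L p.1 p.2)‖ ≤ M₀ :=
      (((isCompact_closedBall _ _).prod hK)).exists_bound_of_continuousOn
        ((hg.continuous.comp hLcont)).continuousOn
    set M : ℝ := max M₀ 0 with hMdef
    have hM : ∀ p ∈ (closedBall (z μ) 3) ×ˢ K, ‖g (L p.1 p.2)‖ ≤ M :=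
      fun p hp => (hM₀ p hp).trans (le_max_left _ _)
    have hM0 : 0 ≤ M := le_max_right _ _
    rw [Metric.tendstoUniformlyOn_iff]
    intro εr hεr
    have hmin : 0 < min 1 (εr / (M + 1)) :=
      lt_min one_pos (div_pos hεr (by linarith))
    have hmem : {h : ℂ | ‖h‖ < min 1 (εr / (M + 1))} ∈ 𝓝[≠] (0:ℂ) := by
      apply nhdsWithin_le_nhds
      refine Filter.mem_of_superset (Metric.ball_mem_nhds (0:ℂ) hmin) ?_
      intro x hx
      simp only [Metric.mem_ball, dist_zero_right] at hx
      exact hx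
    filter_upwards [hmem, self_mem_nhdsWithin] with h hh hh0
    intro w hw
    have hb : ∀ v ∈ closedBall (z μ) 3, ‖g (L v w)‖ ≤ M := fun v hv => hM ⟨v, w⟩ ⟨hv, hw⟩
    have hest := diffquot_est (hGu w) hb (h := h) hh0
      (le_of_lt (lt_of_lt_of_le hh (min_le_left _ _)))
    rw [dist_eq_norm, norm_sub_rev]
    calc ‖q h w - P w‖ = ‖(g (L (z μ + h) w) - g (L (z μ) w)) / h
          - deriv (fun u => g (L u w)) (z μ)‖ := rfl
      _ ≤ M * ‖h‖ := hest
      _ ≤ (M + 1) * ‖h‖ := by nlinarith [norm_nonneg h]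
      _ < (M + 1) * (εr / (M + 1)) := by
          have hlt : ‖h‖ < εr / (M + 1) := lt_of_lt_of_le hh (min_le_right _ _)
          exact mul_lt_mul_of_pos_left hlt (by linarith)
      _ = εr := by field_simp
  have hPdiff : DifferentiableOn ℂ P Set.univ := by
    refine htul.differentiableOn ?_ isOpen_univ
    filter_upwards [self_mem_nhdsWithin] with h hh0
    exact (((hGw _).sub (hGw _)).div_const h).differentiableOn
  have hfun : (fun w : ℂ => pd μ g (Function.update z ν w)) = P := by
    funext w
    simp only [hP, pd]
    rw [Function.update_of_ne hμν]
  rw [hfun, ← differentiableOn_univ]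
  exact hPdiff

lemma update_sub {n : ℕ} (x c : Fin n → ℂ) (μ : Fin n) (w : ℂ) :
    Function.update x μ w - c = Function.update (x - c) μ (w - c μ) := by
  classical
  funext i
  rcases eq_or_ne i μ with rfl | hi
  · simp
  · simp [Function.update_of_ne hi]

end aux

theorem stmt14 {n : ℕ} (hn : 2 ≤ n) (a₁ a₂ a₃ : ℂ) (ha₁ : a₁ ≠ 0)
    (c : Fin n → ℂ) (μ ν : Fin n) (hμν : μ < ν)
    (g : (Fin n → ℂ) → ℂ) (hg : Differentiable ℂ g)
    (hpde : ∀ z, 2 * a₂ * pd μ g z + a₃ * pd μ g z * pd ν g z + 2 * a₃ * pd ν (pd μ g) z = 0)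
    (ε : ℂ) (hε : ε = 1 ∨ ε = -1)
    (f : (Fin n → ℂ) → ℂ)
    (hf : ∀ z, f z = ε * (1 / a₁) * Complex.exp (g (z - c) / 2)) :
    ∀ z, a₁ ^ 2 * (f (z + c)) ^ 2 + (a₂ * pd μ f z + a₃ * pd ν (pd μ f) z) ^ 2
      = Complex.exp (g z) := by
  classical
  have hne : μ ≠ ν := ne_of_lt hμν
  -- first partial of f
  have comp1 : ∀ x, pd μ f x
      = ε * (1 / a₁) * (Complex.exp (g (x - c) / 2) * (pd μ g (x - c) / 2)) := by
    intro x
    have hfun : (fun w => f (Function.update x μ w))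
        = fun w => ε * (1 / a₁) *
            Complex.exp (g (Function.update (x - c) μ (w - c μ)) / 2) := by
      funext w
      rw [hf, update_sub]
    have h1 : HasDerivAt (fun w => g (Function.update (x - c) μ w)) (pd μ g (x - c))
        ((x - c) μ) := by
      have hd : DifferentiableAt ℂ (fun w => g (Function.update (x - c) μ w)) ((x - c) μ) :=
        hg.differentiableAt.comp _ (hasDerivAt_update (x - c) μ _).differentiableAt
      exact hd.hasDerivAt
    have h2 : HasDerivAt (fun w => g (Function.update (x - c) μ (w - c μ))) (pd μ g (x - c))
        (x μ) := by
      have hs : HasDerivAt (fun w : ℂ => w - c μ) 1 (x μ) := (hasDerivAt_id (x μ)).sub_const _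
      have := h1.comp (x μ) hs
      rw [mul_one] at this
      exact this
    have h3 := ((h2.div_const 2).cexp).const_mul (ε * (1 / a₁))
    have hval : Function.update (x - c) μ (x μ - c μ) = x - c := by
      have hxc : x μ - c μ = (x - c) μ := rfl
      rw [hxc, Function.update_eq_self]
    rw [hval] at h3
    show deriv (fun w => f (Function.update x μ w)) (x μ) = _
    rw [hfun, h3.deriv]
  -- second mixed partial of f
  intro z
  set y : Fin n → ℂ := z - c with hy
  have comp2 : pd ν (pd μ f) z
      = ε * (1 / a₁) * (Complex.exp (g y / 2) * (pd ν g y / 2) * (pd μ g y / 2)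
          + Complex.exp (g y / 2) * (pd ν (pd μ g) y / 2)) := by
    have hFfun : pd μ f = fun x =>
        ε * (1 / a₁) * (Complex.exp (g (x - c) / 2) * (pd μ g (x - c) / 2)) := funext comp1
    have hfun2 : (fun w => pd μ f (Function.update z ν w))
        = fun w => ε * (1 / a₁) * (Complex.exp (g (Function.update y ν (w - c ν)) / 2)
            * (pd μ g (Function.update y ν (w - c ν)) / 2)) := by
      funext w
      rw [hFfun]
      simp only []
      rw [update_sub, ← hy]
    -- derivative of w ↦ g (update y ν w)
    have hA : HasDerivAt (fun w => g (Function.update y ν w)) (pd ν g y) (y ν) := by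
      have hd : DifferentiableAt ℂ (fun w => g (Function.update y ν w)) (y ν) :=
        hg.differentiableAt.comp _ (hasDerivAt_update y ν _).differentiableAt
      exact hd.hasDerivAt
    have hs : HasDerivAt (fun w : ℂ => w - c ν) 1 (z ν) := (hasDerivAt_id (z ν)).sub_const _
    have hA' : HasDerivAt (fun w => g (Function.update y ν (w - c ν))) (pd ν g y) (z ν) := by
      have := hA.comp (z ν) hs
      rw [mul_one] at this
      exact this
    have hE := (hA'.div_const 2).cexp
    -- derivative of w ↦ pd μ g (update y ν w)
    have hPd : HasDerivAt (fun w => pd μ g (Function.update y ν w)) (pd ν (pd μ g) y) (y ν) := by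
      have hd : DifferentiableAt ℂ (fun w => pd μ g (Function.update y ν w)) (y ν) :=
        (pd_update_differentiable hg hne y).differentiableAt
      exact hd.hasDerivAt
    have hP' : HasDerivAt (fun w => pd μ g (Function.update y ν (w - c ν)))
        (pd ν (pd μ g) y) (z ν) := by
      have := hPd.comp (z ν) hs
      rw [mul_one] at this
      exact this
    have hprod := (hE.mul (hP'.div_const 2)).const_mul (ε * (1 / a₁))
    have hval : Function.update y ν (z ν - c ν) = y := by
      have hzc : z ν - c ν = y ν := rfl
      rw [hzc, Function.update_eq_self]
    rw [hval] at hprod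
    show deriv (fun w => pd μ f (Function.update z ν w)) (z ν) = _
    rw [hfun2]
    exact hprod.deriv
  -- the bracket vanishes
  have hbr : a₂ * pd μ f z + a₃ * pd ν (pd μ f) z = 0 := by
    rw [comp1, comp2, show z - c = y from rfl]
    linear_combination (ε * (1 / a₁) * Complex.exp (g y / 2) / 4) * hpde y
  rw [hbr]
  have hzc : z + c - c = z := by
    funext i
    simp
  have hε2 : ε ^ 2 = 1 := by rcases hε with h | h <;> simp [h]
  rw [hf, hzc]
  have hexp : Complex.exp (g z / 2) * Complex.exp (g z / 2) = Complex.exp (g z) := by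
    rw [← Complex.exp_add]
    ring_nf
  calc a₁ ^ 2 * (ε * (1 / a₁) * Complex.exp (g z / 2)) ^ 2 + 0 ^ 2
      = ε ^ 2 * (Complex.exp (g z / 2) * Complex.exp (g z / 2)) * (a₁ * (1 / a₁)) ^ 2 := by
        ring
    _ = Complex.exp (g z) := by
        rw [mul_one_div, div_self ha₁, hε2, hexp]
        ring
end

section
/- Let n ≥ 1, let a₁, a₂, a₃, a₄ ∈ ℂ, let c ∈ ℂⁿ, let 1 ≤ μ ≤ n, let β = (β₁,…,βₙ) ∈ ℂⁿ with β_μ ≠ 0, and let K₃, K₄, B ∈ ℂ with a₁ ≠ 0, a₃ ≠ 0, K₃ ≠ 0. Assume K₃² + K₄² = 1 and e^{(1/2)Σⱼ βⱼcⱼ} = (a₁/(a₃K₃))·((K₄β_μ)/2 − (a₄K₃/(4a₁))β_μ² − a₂K₃/a₁). Define f : ℂⁿ → ℂ by f(z) = (2K₃/(a₁β_μ))·e^{(1/2)(Σⱼ βⱼzⱼ + B)}. Then f satisfies (a₁·∂f/∂z_μ(z))² + (a₂·f(z) + a₃·f(z+c) + a₄·∂²f/∂z_μ²(z))² = e^{Σⱼ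 βⱼzⱼ + B} for all z ∈ ℂⁿ. -/
open Complex

lemma pd_aux {n : ℕ} (μ : Fin n) (β : Fin n → ℂ) (K B : ℂ) (z : Fin n → ℂ) :
    pd μ (fun z => K * Complex.exp ((1 / 2) * ((∑ j, β j * z j) + B))) z
      = (β μ / 2) * (K * Complex.exp ((1 / 2) * ((∑ j, β j * z j) + B))) := by
  have hs : ∀ w, ∑ j, β j * Function.update z μ w j
      = β μ * w + ∑ j ∈ Finset.univ.erase μ, β j * z j := by
    intro w
    rw [← Finset.add_sum_erase _ _ (Finset.mem_univ μ), Function.update_self]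
    congr 1
    exact Finset.sum_congr rfl fun j hj => by
      rw [Function.update_of_ne (Finset.ne_of_mem_erase hj)]
  have hz : ∑ j, β j * z j = β μ * z μ + ∑ j ∈ Finset.univ.erase μ, β j * z j := by
    rw [← Finset.add_sum_erase _ _ (Finset.mem_univ μ)]
  set S := ∑ j ∈ Finset.univ.erase μ, β j * z j with hS
  unfold pd
  simp only [hs]
  have h1 : HasDerivAt (fun w : ℂ => (1 / 2) * ((β μ * w + S) + B)) (β μ / 2) (z μ) := by
    have := ((((hasDerivAt_id (z μ)).const_mul (β μ)).add_const S).add_const B).const_mul ((1:ℂ)/2)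
    exact this.congr_deriv (by ring)
  rw [(h1.cexp.const_mul K).deriv, hz]
  ring

theorem stmt15 {n : ℕ} (hn : 1 ≤ n) (a₁ a₂ a₃ a₄ : ℂ) (ha₁ : a₁ ≠ 0) (ha₃ : a₃ ≠ 0)
    (c : Fin n → ℂ) (μ : Fin n) (β : Fin n → ℂ) (hβμ : β μ ≠ 0)
    (K₃ K₄ B : ℂ) (hK₃ : K₃ ≠ 0) (hK : K₃ ^ 2 + K₄ ^ 2 = 1)
    (hexp : Complex.exp ((1 / 2) * ∑ j, β j * c j)
      = (a₁ / (a₃ * K₃)) * ((K₄ * β μ) / 2 - (a₄ * K₃ / (4 * a₁)) * (β μ) ^ 2 - a₂ * K₃ / a₁))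
    (f : (Fin n → ℂ) → ℂ)
    (hf : ∀ z, f z = (2 * K₃ / (a₁ * β μ)) * Complex.exp ((1 / 2) * ((∑ j, β j * z j) + B))) :
    ∀ z, (a₁ * pd μ f z) ^ 2
        + (a₂ * f z + a₃ * f (z + c) + a₄ * pd μ (pd μ f) z) ^ 2
      = Complex.exp ((∑ j, β j * z j) + B) := by
  have hfe : f = fun z => (2 * K₃ / (a₁ * β μ)) * Complex.exp ((1 / 2) * ((∑ j, β j * z j) + B)) :=
    funext hf
  subst hfe
  intro z
  set C := 2 * K₃ / (a₁ * β μ) with hC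
  have h1 : ∀ w, pd μ (fun z => C * Complex.exp ((1 / 2) * ((∑ j, β j * z j) + B))) w
      = (β μ / 2 * C) * Complex.exp ((1 / 2) * ((∑ j, β j * w j) + B)) := by
    intro w; rw [pd_aux]; ring
  have h2 : pd μ (pd μ (fun z => C * Complex.exp ((1 / 2) * ((∑ j, β j * z j) + B)))) z
      = (β μ / 2) * ((β μ / 2 * C) * Complex.exp ((1 / 2) * ((∑ j, β j * z j) + B))) := by
    have : pd μ (fun z => C * Complex.exp ((1 / 2) * ((∑ j, β j * z j) + B)))
        = fun w => (β μ / 2 * C) * Complex.exp ((1 / 2) * ((∑ j, β j * w j) + B)) := funext h1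
    rw [this, pd_aux]
  rw [h1 z, h2]
  simp only [hf]
  have hshift : ∑ j, β j * (z + c) j = (∑ j, β j * z j) + ∑ j, β j * c j := by
    simp [Pi.add_apply, mul_add, Finset.sum_add_distrib]
  rw [hshift]
  set S := ∑ j, β j * z j with hS
  set Sc := ∑ j, β j * c j with hSc
  have e1 : Complex.exp ((1/2) * ((S + Sc) + B))
      = Complex.exp ((1/2) * (S + B)) * Complex.exp ((1/2) * Sc) := by
    rw [← Complex.exp_add]; ring_nf
  have e2 : Complex.exp (S + B) = Complex.exp ((1/2) * (S + B)) ^ 2 := by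
    rw [sq, ← Complex.exp_add]; ring_nf
  rw [e1, e2]
  set E := Complex.exp ((1/2) * (S + B)) with hE
  set X := Complex.exp ((1/2) * Sc) with hX
  -- cleared-denominator forms of the hypotheses
  have hC1 : a₁ * β μ * C = 2 * K₃ := by
    rw [hC]; field_simp
  have hbr : (K₄ * β μ / 2 - a₄ * K₃ / (4 * a₁) * β μ ^ 2 - a₂ * K₃ / a₁)
      = (2 * a₁ * K₄ * β μ - a₄ * K₃ * β μ ^ 2 - 4 * a₂ * K₃) / (4 * a₁) := by
    rw [eq_div_iff (by simp [ha₁] : (4:ℂ) * a₁ ≠ 0)]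
    field_simp
    ring
  have hexp0 : (4 * a₃ * K₃) * X
      = 2 * a₁ * K₄ * β μ - a₄ * K₃ * β μ ^ 2 - 4 * a₂ * K₃ := by
    rw [hexp, hbr]
    field_simp
  have b1 : a₁ * (β μ / 2 * C * E) = K₃ * E := by
    linear_combination (E / 2) * hC1
  have hb2 : K₃ * (a₂ * (C * E) + a₃ * (C * (E * X)) + a₄ * (β μ / 2 * (β μ / 2 * C * E)))
      = K₃ * (K₄ * E) := by
    linear_combination (C * E / 4) * hexp0 + (K₄ * E / 2) * hC1
  have b2 : a₂ * (C * E) + a₃ * (C * (E * X)) + a₄ * (β μ / 2 * (β μ / 2 * C * E)) = K₄ * E :=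
    mul_left_cancel₀ hK₃ hb2
  rw [b1, b2]
  linear_combination E ^ 2 * hK
end
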